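/- Let u be an infinite word over a finite alphabet A. Then D(u) = 0 if and only if for each factor w ∈ L(u), every complete mirror return to w in u is a palindrome. -/

import Mathlib

namespace ZDC

variable {A : Type*}

/-- The finite word `u_i u_{i+1} ⋯ u_{i+n-1}` occurring at position `i` in `u`. -/
def factorAt (u : ℕ → A) (i n : ℕ) : List A := (List.range n).map (fun j => u (i + j))

/-- `w` occurs at index `i` in the infinite word `u`. -/
def OccursAt (u : ℕ → A) (w : List A) (i : ℕ) : Prop := w = factorAt u i w.length

/-- The language of the infinite word `u`: the set of its factors. -/
def Lang (u : ℕ → A) : Set (List A) := {w | ∃ i, OccursAt u w i}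

/-- The language of `u` is closed under reversal. -/
def ClosedUnderReversal (u : ℕ → A) : Prop := ∀ w ∈ Lang u, w.reverse ∈ Lang u

/-- Number of distinct palindromic factors of a finite word (the empty word counts). -/
noncomputable def palCount (w : List A) : ℕ := {v : List A | v <:+: w ∧ v.reverse = v}.ncard

/-- Palindromic defect of a finite word: `|w| + 1 - p(w)`. -/
noncomputable def wordDefect (w : List A) : ℕ := w.length + 1 - palCount w

/-- Palindromic defect of an infinite word: sup of defects of its factors, in `ℕ∞`. -/
noncomputable def Defect (u : ℕ → A) : ℕ∞ := ⨆ w ∈ Lang u, (wordDefect w : ℕ∞)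

/-- `u` contains infinitely many palindromic factors. -/
def Palindromic (u : ℕ → A) : Prop := ∀ N, ∃ w ∈ Lang u, N ≤ w.length ∧ w.reverse = w

/-- `u` is (purely) periodic: `u = zzz⋯` for a nonempty `z`. -/
def Periodic (u : ℕ → A) : Prop := ∃ p, 0 < p ∧ ∀ n, u (n + p) = u n

/-- `u` is eventually periodic: `u = v zzz⋯`. -/
def EventuallyPeriodic (u : ℕ → A) : Prop := ∃ p, 0 < p ∧ ∃ N, ∀ n ≥ N, u (n + p) = u n

/-- `r` is a complete return word to `w` in `u`: it stretches from one occurrence of `w`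
to the next one (inclusively). -/
def IsCompleteReturn (u : ℕ → A) (w r : List A) : Prop :=
  ∃ i j, i < j ∧ OccursAt u w i ∧ OccursAt u w j ∧
    (∀ k, i < k → k < j → ¬ OccursAt u w k) ∧
    r = factorAt u i (j + w.length - i)

/-- `c` is a complete mirror return to `w` in `u`. -/
def IsCompleteMirrorReturn (u : ℕ → A) (w c : List A) : Prop :=
  c ∈ Lang u ∧
  ¬ w <:+: (c.drop 1).dropLast ∧ ¬ w.reverse <:+: (c.drop 1).dropLast ∧
  ((w <+: c ∧ w.reverse <:+ c) ∨ (w.reverse <+: c ∧ w <:+ c))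

/-- Occurrences of `w` and its reversal alternate in `u`. -/
def Alternate (u : ℕ → A) (w : List A) : Prop :=
  (∀ i j, i < j → OccursAt u w i → OccursAt u w j →
    (∀ k, i < k → k < j → ¬ OccursAt u w k) →
    ∃ k, i ≤ k ∧ k ≤ j ∧ OccursAt u w.reverse k) ∧
  (∀ i j, i < j → OccursAt u w.reverse i → OccursAt u w.reverse j →
    (∀ k, i < k → k < j → ¬ OccursAt u w.reverse k) →
    ∃ k, i ≤ k ∧ k ≤ j ∧ OccursAt u w k)

/-- Left extensions `E⁻(w)`. -/
def Eminus (u : ℕ → A) (w : List A) : Set A := {a | a :: w ∈ Lang u}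

/-- Right extensions `E⁺(w)`. -/
def Eplus (u : ℕ → A) (w : List A) : Set A := {b | w ++ [b] ∈ Lang u}

/-- Bilateral extensions `E(w)`. -/
def Eboth (u : ℕ → A) (w : List A) : Set (A × A) := {p | p.1 :: (w ++ [p.2]) ∈ Lang u}

/-- Symmetric bilateral extensions `E⁼(w)`. -/
def Esym (u : ℕ → A) (w : List A) : Set A := {a | a :: (w ++ [a]) ∈ Lang u}

/-- Bilateral multiplicity `m(w) = #E(w) − #E⁺(w) − #E⁻(w) + 1`. -/
noncomputable def mult (u : ℕ → A) (w : List A) : ℤ :=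
  ((Eboth u w).ncard : ℤ) - (Eplus u w).ncard - (Eminus u w).ncard + 1

/-- `w` is a bispecial factor of `u`. -/
def Bispecial (u : ℕ → A) (w : List A) : Prop :=
  2 ≤ (Eminus u w).ncard ∧ 2 ≤ (Eplus u w).ncard

/-- The bipartite extension graph `Γ(w)` with vertex set `E⁻(w) ⊔ E⁺(w)`. -/
def GammaGraph (u : ℕ → A) (w : List A) : SimpleGraph (↥(Eminus u w) ⊕ ↥(Eplus u w)) :=
  SimpleGraph.fromRel (fun x y =>
    ∃ (a : ↥(Eminus u w)) (b : ↥(Eplus u w)),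
      x = Sum.inl a ∧ y = Sum.inr b ∧ ((a : A), (b : A)) ∈ Eboth u w)

/-- The graph `Θ(w)` on the vertex set `E⁻(w)` for a palindrome `w`. -/
def ThetaGraph (u : ℕ → A) (w : List A) : SimpleGraph (↥(Eminus u w)) :=
  SimpleGraph.fromRel (fun a b => ((a : A), (b : A)) ∈ Eboth u w)

/-- Factor complexity `C(n)`. -/
noncomputable def complexity (u : ℕ → A) (n : ℕ) : ℕ :=
  {w ∈ Lang u | w.length = n}.ncard

/-- Palindromic complexity `P(n)`. -/
noncomputable def palComplexity (u : ℕ → A) (n : ℕ) : ℕ :=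
  {w ∈ Lang u | w.length = n ∧ w.reverse = w}.ncard

/-- Extension of a morphism (given by its letter images) to finite words. -/
def Apply (φ : A → List A) (x : List A) : List A := x.flatMap φ

/-- A morphism is primitive if some power maps each letter to a word containing all letters. -/
def Primitive (φ : A → List A) : Prop :=
  ∃ k, 1 ≤ k ∧ ∀ a b : A, b ∈ (Apply φ)^[k] [a]

/-- `u` is a fixed point of `φ`: the image of every prefix of `u` is again a prefix of `u`. -/
def IsFixedPoint (φ : A → List A) (u : ℕ → A) : Prop :=
  ∀ n, Apply φ (factorAt u 0 n) = factorAt u 0 (Apply φ (factorAt u 0 n)).length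

/-- `ψ ▷ φ`: `ψ` is a left conjugate of `φ` with conjugate word `w`,
i.e. `φ(a)w = wψ(a)` for every letter `a`. -/
def LeftConj (ψ φ : A → List A) (w : List A) : Prop :=
  ∀ a, φ a ++ w = w ++ ψ a

/-- A morphism is cyclic if all images of letters are powers of a common word. -/
def Cyclic (φ : A → List A) : Prop :=
  ∃ w : List A, ∀ a, ∃ k : ℕ, φ a = (List.replicate k w).flatten

/-- First letter (as an `Option`) of the image of a letter. -/
def Fst (φ : A → List A) : A → Option A := fun a => (φ a).head?

/-- Last letter (as an `Option`) of the image of a letter. -/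
def Lst (φ : A → List A) : A → Option A := fun a => (φ a).getLast?

/-- `φL` is the leftmost conjugate of `φ`: a left conjugate whose first-letter map
is not constant. -/
def IsLeftmostConj (φL φ : A → List A) : Prop :=
  (∃ w, LeftConj φL φ w) ∧ ¬ (∀ a b, Fst φL a = Fst φL b)

/-- `φR` is the rightmost conjugate of `φ`: a right conjugate whose last-letter map
is not constant. -/
def IsRightmostConj (φR φ : A → List A) : Prop :=
  (∃ w, LeftConj φ φR w) ∧ ¬ (∀ a b, Lst φR a = Lst φR b)

/-- A marked morphism: acyclic, and the first-letter map of its leftmost conjugate and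
the last-letter map of its rightmost conjugate are injective. -/
def Marked (φ : A → List A) : Prop :=
  ¬ Cyclic φ ∧
  (∃ φL, IsLeftmostConj φL φ ∧ Function.Injective (Fst φL)) ∧
  (∃ φR, IsRightmostConj φR φ ∧ Function.Injective (Lst φR))

end ZDC

namespace ZDC

open List

variable {A : Type*}

lemma factorAt_length (u : ℕ → A) (i n : ℕ) : (factorAt u i n).length = n := by
  simp [factorAt]

lemma factorAt_add (u : ℕ → A) (i m n : ℕ) :
    factorAt u i (m + n) = factorAt u i m ++ factorAt u (i + m) n := by
  simp only [factorAt, List.range_add, List.map_append, List.map_map]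
  congr 1
  apply List.map_congr_left
  intro j _
  simp only [Function.comp_apply]
  congr 1
  omega

lemma lang_infix {u : ℕ → A} {v w : List A} (hvw : v <:+: w) (hw : w ∈ Lang u) :
    v ∈ Lang u := by
  obtain ⟨s, t, rfl⟩ := hvw
  obtain ⟨i, hi⟩ := hw
  refine ⟨i + s.length, ?_⟩
  unfold OccursAt at hi ⊢
  rw [List.append_assoc] at hi
  rw [show (s ++ (v ++ t)).length = s.length + (v.length + t.length) by simp] at hi
  rw [factorAt_add, factorAt_add] at hi
  have h1 := (List.append_inj hi (by simp [factorAt_length])).2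
  exact (List.append_inj h1 (by simp [factorAt_length])).1

/-- The set of palindromic factors. -/
def PalSet (v : List A) : Set (List A) := {p | p <:+: v ∧ p.reverse = p}

lemma palSet_finite (v : List A) : (PalSet v).Finite :=
  (List.finite_toSet v.sublists).subset fun _ hp => List.mem_sublists.mpr hp.1.sublist

lemma palCount_eq (v : List A) : palCount v = (PalSet v).ncard := rfl

lemma suffix_of_suffix_le {p q v : List A} (hp : p <:+ v) (hq : q <:+ v)
    (h : p.length ≤ q.length) : p <:+ q := by
  rcases List.suffix_or_suffix_of_suffix hp hq with h1 | h1
  · exact h1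
  · rw [h1.eq_of_length (le_antisymm h1.length_le h)]

lemma pal_suffix_prefix {p q : List A} (hq : q <:+ p) (hp : p.reverse = p)
    (hqq : q.reverse = q) : q <+: p := by
  have h := List.reverse_prefix.mpr hq
  rwa [hp, hqq] at h

lemma prefix_dropLast {p v : List A} (h : p <+: v) (hl : p.length ≤ v.length - 1) :
    p <+: v.dropLast := by
  rw [List.dropLast_eq_take]
  exact List.prefix_take_iff.mpr ⟨h, hl⟩

lemma dropLast_append_left (l₁ l : List A) (h : l ≠ []) :
    (l₁ ++ l).dropLast = l₁ ++ l.dropLast := by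
  obtain ⟨l', a, rfl⟩ := l.eq_nil_or_concat.resolve_left h
  rw [List.concat_eq_append, ← List.append_assoc, List.dropLast_concat, List.dropLast_concat]

lemma suffix_of_not_infix_dropLast {p v : List A} (h : p <:+: v)
    (h2 : ¬ p <:+: v.dropLast) : p <:+ v := by
  obtain ⟨s, t, hst⟩ := h
  rcases eq_or_ne t [] with rfl | ht
  · exact ⟨s, by simpa using hst⟩
  · exfalso
    apply h2
    refine ⟨s, t.dropLast, ?_⟩
    rw [← hst, dropLast_append_left (s ++ p) t ht]

lemma isPrefix_drop {l₁ l₂ : List A} (h : l₁ <+: l₂) (n : ℕ) :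
    l₁.drop n <+: l₂.drop n := by
  obtain ⟨r, rfl⟩ := h
  rcases le_or_gt n l₁.length with hn | hn
  · rw [List.drop_append_of_le_length hn]
    exact List.prefix_append _ _
  · rw [List.drop_eq_nil_of_le hn.le]
    exact List.nil_prefix

lemma palCount_nil : palCount ([] : List A) = 1 := by
  rw [palCount_eq]
  have h : PalSet ([] : List A) = {[]} := by
    ext p
    simp only [PalSet, Set.mem_setOf_eq, List.infix_nil, Set.mem_singleton_iff]
    constructor
    · exact fun h => h.1
    · rintro rfl; exact ⟨rfl, rfl⟩
  rw [h, Set.ncard_singleton]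

lemma palCount_le (v : List A) : palCount v ≤ v.length + 1 := by
  induction v using List.reverseRecOn with
  | nil => rw [palCount_nil]; simp
  | append_singleton v a ih =>
      have hfin := palSet_finite (v ++ [a])
      have hfinv := palSet_finite v
      have key : ∀ p q : List A, p ∈ PalSet (v ++ [a]) \ PalSet v →
          q ∈ PalSet (v ++ [a]) \ PalSet v → p.length ≤ q.length → p = q := by
        intro p q hp hq hlen
        obtain ⟨⟨hpi, hpp⟩, hpn⟩ := hp
        obtain ⟨⟨hqi, hqp⟩, hqn⟩ := hq
        have hpnv : ¬ p <:+: v := fun h => hpn ⟨h, hpp⟩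
        have hqnv : ¬ q <:+: v := fun h => hqn ⟨h, hqp⟩
        have hps : p <:+ (v ++ [a]) :=
          suffix_of_not_infix_dropLast hpi (by rwa [List.dropLast_concat])
        have hqs : q <:+ (v ++ [a]) :=
          suffix_of_not_infix_dropLast hqi (by rwa [List.dropLast_concat])
        have hpq : p <:+ q := suffix_of_suffix_le hps hqs hlen
        rcases eq_or_ne p.length q.length with he | hne
        · exact hpq.eq_of_length he
        · exfalso
          apply hpnv
          obtain ⟨t, htq⟩ := pal_suffix_prefix hpq hqp hpp
          obtain ⟨s, hsq⟩ := hqs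
          have ht : t ≠ [] := by
            intro h; subst h; rw [List.append_nil] at htq; exact hne (by rw [htq])
          have hv : s ++ (p ++ t.dropLast) = v := by
            have h1 : s ++ (p ++ t) = v ++ [a] := by rw [htq]; exact hsq
            have h2 := congrArg List.dropLast h1
            rwa [List.dropLast_concat, dropLast_append_left s (p ++ t) (by simp [ht]),
              dropLast_append_left p t ht] at h2
          exact ⟨s, t.dropLast, by rw [List.append_assoc]; exact hv⟩
      have hsub : ∀ p ∈ PalSet (v ++ [a]) \ PalSet v,
          ∀ q ∈ PalSet (v ++ [a]) \ PalSet v, p = q := by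
        intro p hp q hq
        rcases le_total p.length q.length with h | h
        · exact key p q hp hq h
        · exact (key q p hq hp h).symm
      have hcover : PalSet (v ++ [a]) ⊆ PalSet v ∪ (PalSet (v ++ [a]) \ PalSet v) := by
        intro p hp
        by_cases h : p ∈ PalSet v
        · exact Or.inl h
        · exact Or.inr ⟨hp, h⟩
      rw [palCount_eq] at ih ⊢
      calc (PalSet (v ++ [a])).ncard
          ≤ (PalSet v ∪ (PalSet (v ++ [a]) \ PalSet v)).ncard :=
            Set.ncard_le_ncard hcover (hfinv.union hfin.diff)
        _ ≤ (PalSet v).ncard + (PalSet (v ++ [a]) \ PalSet v).ncard :=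
            Set.ncard_union_le _ _
        _ ≤ (v.length + 1) + 1 :=
            add_le_add ih ((Set.ncard_le_one hfin.diff).mpr hsub)
        _ = (v ++ [a]).length + 1 := by simp

lemma exists_lps (v : List A) :
    ∃ p, p <:+ v ∧ p.reverse = p ∧
      ∀ q, q <:+ v → q.reverse = q → q.length ≤ p.length := by
  have hfin : {p : List A | p <:+ v ∧ p.reverse = p}.Finite :=
    (palSet_finite v).subset (fun p hp => ⟨hp.1.isInfix, hp.2⟩)
  have hne : {p : List A | p <:+ v ∧ p.reverse = p}.Nonempty :=
    ⟨[], List.nil_suffix, rfl⟩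
  obtain ⟨p, hp, hmax⟩ := Set.Finite.exists_maximalFor List.length _ hfin hne
  refine ⟨p, hp.1, hp.2, fun q hq hqp => ?_⟩
  rcases le_total q.length p.length with h | h
  · exact h
  · exact (hmax (j := q) ⟨hq, hqp⟩ h).ge

lemma lps_not_infix_dropLast {v : List A} (hv : v ≠ [])
    (h1 : palCount v = v.length + 1) (h2 : palCount v.dropLast = v.dropLast.length + 1)
    {p : List A} (hps : p <:+ v) (hpp : p.reverse = p)
    (hmax : ∀ q, q <:+ v → q.reverse = q → q.length ≤ p.length) :
    ¬ p <:+: v.dropLast := by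
  intro hocc
  have hsub : PalSet v ⊆ PalSet v.dropLast := by
    intro q hq
    obtain ⟨hqi, hqp⟩ := hq
    by_cases h : q <:+: v.dropLast
    · exact ⟨h, hqp⟩
    · have hqs : q <:+ v := suffix_of_not_infix_dropLast hqi h
      have hqsp : q <:+ p := suffix_of_suffix_le hqs hps (hmax q hqs hqp)
      exact absurd ((pal_suffix_prefix hqsp hpp hqp).isInfix.trans hocc) h
  have hle := Set.ncard_le_ncard hsub (palSet_finite _)
  rw [← palCount_eq, ← palCount_eq, h1, h2, List.length_dropLast] at hle
  have hpos : 0 < v.length := List.length_pos_iff.mpr hv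
  omega

lemma mirror_core {u : ℕ → A} (H : ∀ x ∈ Lang u, palCount x = x.length + 1)
    {w c : List A} (hc : c ∈ Lang u)
    (h1 : ¬ w <:+: (c.drop 1).dropLast)
    (hpre : w <+: c) (hsuf : w.reverse <:+ c) : c.reverse = c := by
  have hw : w ≠ [] := by rintro rfl; exact h1 List.nil_infix
  have hm : 0 < w.length := List.length_pos_iff.mpr hw
  rcases eq_or_lt_of_le hpre.length_le with he | hlt
  · have hwc : w = c := hpre.eq_of_length he
    have h2 : w.reverse = c := hsuf.eq_of_length (by simp [he])
    rw [← hwc] at h2 ⊢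
    exact h2
  · by_contra hcc
    have hcne : c ≠ [] := by intro h; subst h; simp at hlt
    obtain ⟨p, hps, hpp, hmax⟩ := exists_lps c
    have hdl : c.dropLast ∈ Lang u := lang_infix (List.dropLast_prefix c).isInfix hc
    have hU : ¬ p <:+: c.dropLast :=
      lps_not_infix_dropLast hcne (H c hc) (H _ hdl) hps hpp hmax
    rcases lt_or_ge p.length w.length with hlp | hlp
    · have h3 : p <:+ w.reverse :=
        suffix_of_suffix_le hps hsuf (by simp only [List.length_reverse]; omega)
      have h4 : p <+: w := by
        have h5 := List.reverse_prefix.mpr h3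
        rwa [hpp, List.reverse_reverse] at h5
      have h6 : p <+: c.dropLast := prefix_dropLast (h4.trans hpre) (by omega)
      exact hU h6.isInfix
    · have h3 : w.reverse <:+ p := suffix_of_suffix_le hsuf hps (by simpa using hlp)
      have h4 : w <+: p := by
        have h5 := List.reverse_prefix.mpr h3
        rwa [hpp, List.reverse_reverse] at h5
      have hpc : p ≠ c := fun h => hcc (by rw [← h]; exact hpp)
      have hplt : p.length < c.length :=
        lt_of_le_of_ne hps.length_le (fun h => hpc (hps.eq_of_length h))
      obtain ⟨t, htp⟩ := h4
      obtain ⟨s, hsc⟩ := hps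
      rcases eq_or_ne t [] with rfl | ht
      · have hwp : w = p := by simpa using htp
        have h6 : p <+: c.dropLast := by
          refine prefix_dropLast ?_ (by omega)
          rw [← hwp]; exact hpre
        exact hU h6.isInfix
      · apply h1
        have hs : s ≠ [] := by
          intro h; subst h
          rw [List.nil_append] at hsc
          subst hsc
          exact absurd hplt (lt_irrefl _)
        have hc2 : c = s ++ (w ++ t) := by rw [← hsc, ← htp]
        refine ⟨s.drop 1, t.dropLast, ?_⟩
        rw [hc2, List.drop_append_of_le_length (List.length_pos_iff.mpr hs),
          dropLast_append_left (s.drop 1) (w ++ t) (by simp [ht]),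
          dropLast_append_left w t ht, List.append_assoc]

lemma forward {u : ℕ → A} (H : ∀ x ∈ Lang u, palCount x = x.length + 1) :
    ∀ w ∈ Lang u, ∀ c, IsCompleteMirrorReturn u w c → c.reverse = c := by
  intro w _ c hmr
  obtain ⟨hc, h1, h2, hcase⟩ := hmr
  rcases hcase with ⟨hpre, hsuf⟩ | ⟨hpre, hsuf⟩
  · exact mirror_core H hc h1 hpre hsuf
  · exact mirror_core H hc h2 hpre (by rwa [List.reverse_reverse])

lemma lps_unioccurrent_of_K {u : ℕ → A}
    (K : ∀ w ∈ Lang u, ∀ c, IsCompleteMirrorReturn u w c → c.reverse = c)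
    {v : List A} (hv : v ∈ Lang u) (hvne : v ≠ [])
    {p : List A} (hps : p <:+ v) (hpp : p.reverse = p)
    (hmax : ∀ q, q <:+ v → q.reverse = q → q.length ≤ p.length) :
    ¬ p <:+: v.dropLast := by
  classical
  intro hocc
  have hvpos : 0 < v.length := List.length_pos_iff.mpr hvne
  have hpn : p.length ≤ v.length := hps.length_le
  have hp1 : 1 ≤ p.length := by
    have := hmax [v.getLast hvne] ⟨v.dropLast, List.dropLast_append_getLast hvne⟩ (by simp)
    simpa using this
  set k₀ := v.length - p.length with hk0
  obtain ⟨s, t, hst⟩ := hocc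
  have hstl := congrArg List.length hst
  simp only [List.length_append, List.length_dropLast] at hstl
  have hk₁pre : p <+: v.drop s.length := by
    have h1 : s ++ p ++ t <+: v := by rw [hst]; exact List.dropLast_prefix v
    have h2 := isPrefix_drop h1 s.length
    rw [List.append_assoc, List.drop_left] at h2
    exact (List.prefix_append p t).trans h2
  have hk₁lt : s.length < k₀ := by omega
  set P : ℕ → Prop := fun k => k < k₀ ∧ p <+: v.drop k with hP
  have hPk₁ : P s.length := ⟨hk₁lt, hk₁pre⟩
  set k := Nat.findGreatest P k₀ with hk
  have hPk : P k := Nat.findGreatest_spec (le_of_lt hk₁lt) hPk₁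
  obtain ⟨hkk₀, hkpre⟩ := hPk
  set c := v.drop k with hcdef
  have hcs : c <:+ v := List.drop_suffix k v
  have hclen : c.length = v.length - k := by rw [hcdef, List.length_drop]
  have hcl : c ∈ Lang u := lang_infix hcs.isInfix hv
  have hpl : p ∈ Lang u := lang_infix hps.isInfix hv
  have hpsc : p <:+ c := suffix_of_suffix_le hps hcs (by omega)
  have hcd1 : c.drop 1 = v.drop (k + 1) := by
    rw [hcdef, List.drop_drop]
    try (congr 1; omega)
  have hint : ¬ p <:+: (c.drop 1).dropLast := by
    rintro ⟨s', t', hst'⟩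
    have hlen' := congrArg List.length hst'
    simp only [List.length_append, List.length_dropLast, hcd1, List.length_drop] at hlen'
    have hpre' : p <+: v.drop (k + 1 + s'.length) := by
      have h1 : s' ++ p ++ t' <+: v.drop (k + 1) := by
        rw [hst', hcd1]; exact List.dropLast_prefix _
      have h2 := isPrefix_drop h1 s'.length
      rw [List.append_assoc, List.drop_left] at h2
      have h5 : (v.drop (k + 1)).drop s'.length = v.drop (k + 1 + s'.length) := by
        rw [List.drop_drop]
        try (congr 1; omega)
      rw [h5] at h2
      exact (List.prefix_append p t').trans h2
    have hlt : k < k + 1 + s'.length := by omega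
    have hle : k + 1 + s'.length ≤ k₀ := by omega
    exact Nat.findGreatest_is_greatest hlt hle ⟨by omega, hpre'⟩
  have hcpal : c.reverse = c :=
    K p hpl c ⟨hcl, hint, by rwa [hpp], Or.inl ⟨hkpre, by rwa [hpp]⟩⟩
  have hfin := hmax c hcs hcpal
  omega

lemma rich_of_K {u : ℕ → A}
    (K : ∀ w ∈ Lang u, ∀ c, IsCompleteMirrorReturn u w c → c.reverse = c) :
    ∀ v ∈ Lang u, palCount v = v.length + 1 := by
  suffices H : ∀ n, ∀ v : List A, v.length = n → v ∈ Lang u → palCount v = v.length + 1 by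
    intro v hv; exact H v.length v rfl hv
  intro n
  induction n with
  | zero =>
      intro v hv _
      rw [List.length_eq_zero_iff.mp hv]
      simpa using palCount_nil
  | succ n ih =>
      intro v hv hvl
      have hvne : v ≠ [] := by intro h; subst h; simp at hv
      have hdl : v.dropLast ∈ Lang u := lang_infix (List.dropLast_prefix v).isInfix hvl
      have hdll : v.dropLast.length = n := by rw [List.length_dropLast, hv]; omega
      have ihdl := ih v.dropLast hdll hdl
      obtain ⟨p, hps, hpp, hmax⟩ := exists_lps v
      have hA : ¬ p <:+: v.dropLast := lps_unioccurrent_of_K K hvl hvne hps hpp hmax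
      have hsub : insert p (PalSet v.dropLast) ⊆ PalSet v := by
        intro q hq
        rcases Set.mem_insert_iff.mp hq with rfl | hq'
        · exact ⟨hps.isInfix, hpp⟩
        · exact ⟨hq'.1.trans (List.dropLast_prefix v).isInfix, hq'.2⟩
      have hins : (insert p (PalSet v.dropLast)).ncard = n + 2 := by
        rw [Set.ncard_insert_of_notMem (fun hmem => hA hmem.1) (palSet_finite _),
          ← palCount_eq, ihdl, hdll]
      have hge := Set.ncard_le_ncard hsub (palSet_finite v)
      have hle := palCount_le v
      rw [palCount_eq, hv] at hle ⊢
      omega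

end ZDC


open ZDC in
/-- `D(u) = 0` iff for each factor `w ∈ L(u)` every complete mirror
return to `w` in `u` is a palindrome. -/
theorem stmt_16 {A : Type*} [Fintype A] (u : ℕ → A) :
    Defect u = 0 ↔
      ∀ w ∈ Lang u, ∀ c, IsCompleteMirrorReturn u w c → c.reverse = c := by
  have h1 : ∀ w : List A, (wordDefect w = 0 ↔ palCount w = w.length + 1) := by
    intro w
    have := palCount_le w
    unfold wordDefect
    omega
  have h0 : Defect u = 0 ↔ ∀ w ∈ Lang u, wordDefect w = 0 := by
    rw [← nonpos_iff_eq_zero, Defect, iSup₂_le_iff]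
    constructor
    · intro h w hw
      exact_mod_cast nonpos_iff_eq_zero.mp (h w hw)
    · intro h w hw
      simp [h w hw]
  rw [h0]
  constructor
  · intro h w hw c hc
    exact ZDC.forward (fun x hx => (h1 x).mp (h x hx)) w hw c hc
  · intro K w hw
    exact (h1 w).mpr (rich_of_K K w hw)
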